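/- Directional stability of the composed quantile map, discrete case (step of Proposition A.3): Let R > 0, N ≥ 1, d ≥ 1, and let x₁, …, x_N, y₁, …, y_N be points of the closed ball B̄(0,R) ⊆ ℝ^d. Let P = (1/N)·Σ_{i=1}^N δ_{x_i} and Q = (1/N)·Σ_{i=1}^N δ_{y_i}. Then for all unit vectors u, v ∈ S^{d−1}: ∫_{−R}^{R} |F_{Q,v}^{-1}(F_{P,u}(x)) − F_{Q,v}^{-1}(F_{P,v}(x))| dx ≤ 4R²·‖u − v‖₂. -/

import Mathlib

open MeasureTheory Set

/-- The unit sphere `S^{d-1}` in `ℝ^d`. -/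
def sph (d : ℕ) : Set (EuclideanSpace ℝ (Fin d)) :=
  Metric.sphere (0 : EuclideanSpace ℝ (Fin d)) 1

/-- CDF of the projection of `μ` onto direction `u`. -/
noncomputable def projCDF {d : ℕ} (μ : Measure (EuclideanSpace ℝ (Fin d)))
    (u : EuclideanSpace ℝ (Fin d)) (x : ℝ) : ℝ :=
  (μ {y | (inner ℝ u y : ℝ) ≤ x}).toReal

/-- Quantile function of the projection of `μ` onto direction `u`:
`F_{μ,u}^{-1}(t) = inf {x ∈ [-R,R] : F_{μ,u}(x) ≥ t}`. -/
noncomputable def projQuantile {d : ℕ} (R : ℝ) (μ : Measure (EuclideanSpace ℝ (Fin d)))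
    (u : EuclideanSpace ℝ (Fin d)) (t : ℝ) : ℝ :=
  sInf {x : ℝ | x ∈ Set.Icc (-R) R ∧ t ≤ projCDF μ u x}

/-- Topological support of a measure on `ℝ`. -/
def msupp (μ : Measure ℝ) : Set ℝ := {x | ∀ ε > (0 : ℝ), 0 < μ (Metric.ball x ε)}

lemma key_integral (R ε : ℝ) (hR : 0 ≤ R) (hε : 0 ≤ ε) (g gu : ℝ → ℝ)
    (hg : Monotone g) (hgu : Monotone gu) (hb : ∀ t, g t ∈ Set.Icc (-R) R)
    (hlow : ∀ t, g (t - ε) ≤ gu t) (hhigh : ∀ t, gu t ≤ g (t + ε)) :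
    ∫ t in (-R)..R, |gu t - g t| ≤ 4 * R * ε := by
  have hint : ∀ a b : ℝ, IntervalIntegrable g volume a b :=
    fun a b => hg.intervalIntegrable
  have hintu : ∀ a b : ℝ, IntervalIntegrable gu volume a b :=
    fun a b => hgu.intervalIntegrable
  have hgp : Monotone (fun t => g (t + ε)) := fun s t hst => hg (by linarith)
  have hgm : Monotone (fun t => g (t - ε)) := fun s t hst => hg (by linarith)
  have hintp : ∀ a b : ℝ, IntervalIntegrable (fun t => g (t + ε)) volume a b :=
    fun a b => hgp.intervalIntegrable
  have hintm : ∀ a b : ℝ, IntervalIntegrable (fun t => g (t - ε)) volume a b :=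
    fun a b => hgm.intervalIntegrable
  have habs : IntervalIntegrable (fun t => |gu t - g t|) volume (-R) R :=
    ((hintu _ _).sub (hint _ _)).abs
  have hpt : ∀ t, |gu t - g t| ≤ g (t + ε) - g (t - ε) := by
    intro t
    rw [abs_sub_le_iff]
    constructor
    · have h1 : g (t - ε) ≤ g t := hg (by linarith)
      have := hhigh t; linarith
    · have h1 : g t ≤ g (t + ε) := hg (by linarith)
      have := hlow t; linarith
  have step1 : ∫ t in (-R)..R, |gu t - g t| ≤
      ∫ t in (-R)..R, (g (t + ε) - g (t - ε)) := by
    apply intervalIntegral.integral_mono_on (by linarith) habs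
      ((hintp _ _).sub (hintm _ _))
    intro t _; exact hpt t
  have step2 : ∫ t in (-R)..R, (g (t + ε) - g (t - ε)) =
      (∫ t in (-R + ε)..(R + ε), g t) - ∫ t in (-R - ε)..(R - ε), g t := by
    rw [intervalIntegral.integral_sub (hintp _ _) (hintm _ _),
      intervalIntegral.integral_comp_add_right g ε,
      intervalIntegral.integral_comp_sub_right g ε]
  have chasles1 : (∫ t in (-R + ε)..(R - ε), g t) + (∫ t in (R - ε)..(R + ε), g t)
      = ∫ t in (-R + ε)..(R + ε), g t :=
    intervalIntegral.integral_add_adjacent_intervals (hint _ _) (hint _ _)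
  have chasles2 : (∫ t in (-R - ε)..(-R + ε), g t) + (∫ t in (-R + ε)..(R - ε), g t)
      = ∫ t in (-R - ε)..(R - ε), g t :=
    intervalIntegral.integral_add_adjacent_intervals (hint _ _) (hint _ _)
  have hub : ∫ t in (R - ε)..(R + ε), g t ≤ 2 * ε * R := by
    have : ∫ t in (R - ε)..(R + ε), g t ≤ ∫ t in (R - ε)..(R + ε), R := by
      apply intervalIntegral.integral_mono_on (by linarith) (hint _ _)
        intervalIntegrable_const
      intro t _; exact (hb t).2
    have h2 : ∫ _ in (R - ε)..(R + ε), (R : ℝ) = 2 * ε * R := by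
      rw [intervalIntegral.integral_const, smul_eq_mul]; ring
    linarith
  have hlb : -(2 * ε * R) ≤ ∫ t in (-R - ε)..(-R + ε), g t := by
    have : ∫ t in (-R - ε)..(-R + ε), (-R : ℝ) ≤ ∫ t in (-R - ε)..(-R + ε), g t := by
      apply intervalIntegral.integral_mono_on (by linarith) intervalIntegrable_const (hint _ _)
      intro t _; exact (hb t).1
    have h2 : ∫ _ in (-R - ε)..(-R + ε), (-R : ℝ) = -(2 * ε * R) := by
      rw [intervalIntegral.integral_const, smul_eq_mul]; ring
    linarith
  calc ∫ t in (-R)..R, |gu t - g t| ≤ _ := step1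
    _ = _ := step2
    _ ≤ 4 * R * ε := by linarith

lemma smul_sum_dirac_apply {α : Type*} [MeasurableSpace α] (N : ℕ) (z : Fin N → α)
    (S : Set α) (hS : MeasurableSet S) :
    ((N : ENNReal)⁻¹ • ∑ i : Fin N, Measure.dirac (z i)) S =
      (N : ENNReal)⁻¹ * ∑ i : Fin N, S.indicator 1 (z i) := by
  simp [Measure.smul_apply, Measure.finset_sum_apply, Measure.dirac_apply' _ hS]

lemma inner_set_measurable {d : ℕ} (w : EuclideanSpace ℝ (Fin d)) (r : ℝ) :
    MeasurableSet {y : EuclideanSpace ℝ (Fin d) | (inner ℝ w y : ℝ) ≤ r} :=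
  (isClosed_le (Continuous.inner continuous_const continuous_id) continuous_const).measurableSet

/-- Directional stability of the composed quantile map, discrete case. -/
theorem composed_quantile_directional_stability_discrete
    (d : ℕ) (hd : 1 ≤ d) (R : ℝ) (hR : 0 < R) (N : ℕ) (hN : 1 ≤ N)
    (x y : Fin N → EuclideanSpace ℝ (Fin d))
    (hx : ∀ i, x i ∈ Metric.closedBall (0 : EuclideanSpace ℝ (Fin d)) R)
    (hy : ∀ i, y i ∈ Metric.closedBall (0 : EuclideanSpace ℝ (Fin d)) R)
    (P Q : Measure (EuclideanSpace ℝ (Fin d)))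
    (hP : P = (N : ENNReal)⁻¹ • ∑ i : Fin N, Measure.dirac (x i))
    (hQ : Q = (N : ENNReal)⁻¹ • ∑ i : Fin N, Measure.dirac (y i)) :
    ∀ u ∈ sph d, ∀ v ∈ sph d,
      ∫ t in (-R)..R,
          |projQuantile R Q v (projCDF P u t) - projQuantile R Q v (projCDF P v t)| ≤
        4 * R ^ 2 * ‖u - v‖ := by
  intro u hu v hv
  have hNne : (N : ENNReal) ≠ 0 := by
    simp only [ne_eq, Nat.cast_eq_zero]; omega
  have hNtop : (N : ENNReal) ≠ ⊤ := ENNReal.natCast_ne_top N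
  have hnv : ‖v‖ = 1 := by simpa [sph] using hv
  have hxn : ∀ i, ‖x i‖ ≤ R := fun i => by simpa [mem_closedBall_zero_iff] using hx i
  have hyn : ∀ i, ‖y i‖ ≤ R := fun i => by simpa [mem_closedBall_zero_iff] using hy i
  -- P measure formula and monotonicity at points
  have hPapp : ∀ (w : EuclideanSpace ℝ (Fin d)) (r : ℝ),
      P {z | (inner ℝ w z : ℝ) ≤ r} =
        (N : ENNReal)⁻¹ * ∑ i : Fin N, ({z : EuclideanSpace ℝ (Fin d) | (inner ℝ w z : ℝ) ≤ r}).indicator 1 (x i) := by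
    intro w r; rw [hP]; exact smul_sum_dirac_apply N x _ (inner_set_measurable w r)
  have hQapp : ∀ (w : EuclideanSpace ℝ (Fin d)) (r : ℝ),
      Q {z | (inner ℝ w z : ℝ) ≤ r} =
        (N : ENNReal)⁻¹ * ∑ i : Fin N, ({z : EuclideanSpace ℝ (Fin d) | (inner ℝ w z : ℝ) ≤ r}).indicator 1 (y i) := by
    intro w r; rw [hQ]; exact smul_sum_dirac_apply N y _ (inner_set_measurable w r)
  -- P of such sets is ≤ 1
  have hind_le : ∀ (S : Set (EuclideanSpace ℝ (Fin d))) (a : EuclideanSpace ℝ (Fin d)),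
      S.indicator (1 : EuclideanSpace ℝ (Fin d) → ENNReal) a ≤ 1 := by
    intro S a; by_cases h : a ∈ S <;> simp [Set.indicator_apply, h]
  have hNmul : (N : ENNReal)⁻¹ * (N : ENNReal) = 1 := ENNReal.inv_mul_cancel hNne hNtop
  have hP_le_one : ∀ (w : EuclideanSpace ℝ (Fin d)) (r : ℝ),
      P {z | (inner ℝ w z : ℝ) ≤ r} ≤ 1 := by
    intro w r
    rw [hPapp]
    calc (N : ENNReal)⁻¹ * ∑ i : Fin N, _ ≤ (N : ENNReal)⁻¹ * ∑ _i : Fin N, (1 : ENNReal) :=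
          mul_le_mul_right (Finset.sum_le_sum fun i _ => hind_le _ _) _
      _ = 1 := by simpa using hNmul
  have hQ_le_one : ∀ (w : EuclideanSpace ℝ (Fin d)) (r : ℝ),
      Q {z | (inner ℝ w z : ℝ) ≤ r} ≤ 1 := by
    intro w r
    rw [hQapp]
    calc (N : ENNReal)⁻¹ * ∑ i : Fin N, _ ≤ (N : ENNReal)⁻¹ * ∑ _i : Fin N, (1 : ENNReal) :=
          mul_le_mul_right (Finset.sum_le_sum fun i _ => hind_le _ _) _
      _ = 1 := by simpa using hNmul
  have hP_ne_top : ∀ (w : EuclideanSpace ℝ (Fin d)) (r : ℝ),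
      P {z | (inner ℝ w z : ℝ) ≤ r} ≠ ⊤ := fun w r => ((hP_le_one w r).trans_lt ENNReal.one_lt_top).ne
  have hQ_ne_top : ∀ (w : EuclideanSpace ℝ (Fin d)) (r : ℝ),
      Q {z | (inner ℝ w z : ℝ) ≤ r} ≠ ⊤ := fun w r => ((hQ_le_one w r).trans_lt ENNReal.one_lt_top).ne
  -- projCDF facts
  have hCDF_le_one : ∀ (w : EuclideanSpace ℝ (Fin d)) (r : ℝ), projCDF P w r ≤ 1 := by
    intro w r
    have := ENNReal.toReal_mono ENNReal.one_ne_top (hP_le_one w r)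
    simpa [projCDF] using this
  have hCDF_mono : ∀ (w : EuclideanSpace ℝ (Fin d)), Monotone (projCDF P w) := by
    intro w s t hst
    exact ENNReal.toReal_mono (hP_ne_top w t) (measure_mono fun z hz => le_trans hz hst)
  -- pointwise P-measure comparison
  have hPcmp : ∀ (w₁ w₂ : EuclideanSpace ℝ (Fin d)) (r₁ r₂ : ℝ),
      (∀ i, (inner ℝ w₁ (x i) : ℝ) ≤ r₁ → (inner ℝ w₂ (x i) : ℝ) ≤ r₂) →
      projCDF P w₁ r₁ ≤ projCDF P w₂ r₂ := by
    intro w₁ w₂ r₁ r₂ h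
    have : P {z | (inner ℝ w₁ z : ℝ) ≤ r₁} ≤ P {z | (inner ℝ w₂ z : ℝ) ≤ r₂} := by
      rw [hPapp, hPapp]
      refine mul_le_mul_right (Finset.sum_le_sum fun i _ => ?_) _
      by_cases hi : (inner ℝ w₁ (x i) : ℝ) ≤ r₁
      · have m1 : x i ∈ {z : EuclideanSpace ℝ (Fin d) | (inner ℝ w₁ z : ℝ) ≤ r₁} := hi
        have m2 : x i ∈ {z : EuclideanSpace ℝ (Fin d) | (inner ℝ w₂ z : ℝ) ≤ r₂} := h i hi
        rw [Set.indicator_of_mem m1, Set.indicator_of_mem m2]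
      · have m1 : x i ∉ {z : EuclideanSpace ℝ (Fin d) | (inner ℝ w₁ z : ℝ) ≤ r₁} := hi
        rw [Set.indicator_of_notMem m1]
        exact zero_le
    exact ENNReal.toReal_mono (hP_ne_top w₂ r₂) this
  -- F_{Q,v}(R) = 1
  have hQR : projCDF Q v R = 1 := by
    have hmem : ∀ i, y i ∈ {z : EuclideanSpace ℝ (Fin d) | (inner ℝ v z : ℝ) ≤ R} := by
      intro i
      have h1 : (inner ℝ v (y i) : ℝ) ≤ ‖v‖ * ‖y i‖ := real_inner_le_norm v (y i)
      have : (inner ℝ v (y i) : ℝ) ≤ R := by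
        rw [hnv, one_mul] at h1; exact h1.trans (hyn i)
      exact this
    have : Q {z | (inner ℝ v z : ℝ) ≤ R} = 1 := by
      rw [hQapp]
      have : ∀ i : Fin N, ({z : EuclideanSpace ℝ (Fin d) | (inner ℝ v z : ℝ) ≤ R}).indicator
          (1 : EuclideanSpace ℝ (Fin d) → ENNReal) (y i) = 1 := by
        intro i; rw [Set.indicator_of_mem (hmem i)]; rfl
      rw [Finset.sum_congr rfl fun i _ => this i]
      simpa using hNmul
    show (Q {z : EuclideanSpace ℝ (Fin d) | (inner ℝ v z : ℝ) ≤ R}).toReal = 1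
    rw [this]; exact ENNReal.toReal_one
  -- quantile facts
  have hSmem : ∀ t : ℝ, t ≤ 1 →
      R ∈ {r : ℝ | r ∈ Set.Icc (-R) R ∧ t ≤ projCDF Q v r} := by
    intro t ht
    exact ⟨⟨by linarith, le_refl R⟩, by rw [hQR]; exact ht⟩
  have hbdd : ∀ t : ℝ, BddBelow {r : ℝ | r ∈ Set.Icc (-R) R ∧ t ≤ projCDF Q v r} :=
    fun t => ⟨-R, fun r hr => hr.1.1⟩
  have hqmem : ∀ t : ℝ, t ≤ 1 → projQuantile R Q v t ∈ Set.Icc (-R) R := by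
    intro t ht
    constructor
    · exact le_csInf ⟨R, hSmem t ht⟩ fun r hr => hr.1.1
    · exact csInf_le (hbdd t) (hSmem t ht)
  have hqmono : ∀ s t : ℝ, s ≤ t → t ≤ 1 → projQuantile R Q v s ≤ projQuantile R Q v t := by
    intro s t hst ht
    exact csInf_le_csInf (hbdd s) ⟨R, hSmem t ht⟩ fun r hr => ⟨hr.1, hst.trans hr.2⟩
  -- set up g, gu and ε
  set ε : ℝ := R * ‖u - v‖ with hεdef
  have hε : 0 ≤ ε := mul_nonneg hR.le (norm_nonneg _)
  set g : ℝ → ℝ := fun t => projQuantile R Q v (projCDF P v t) with hgdef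
  set gu : ℝ → ℝ := fun t => projQuantile R Q v (projCDF P u t) with hgudef
  have hinner_diff : ∀ i, |(inner ℝ u (x i) : ℝ) - (inner ℝ v (x i) : ℝ)| ≤ ε := by
    intro i
    have h1 : (inner ℝ u (x i) : ℝ) - (inner ℝ v (x i) : ℝ) = (inner ℝ (u - v) (x i) : ℝ) :=
      (inner_sub_left u v (x i)).symm
    rw [h1]
    calc |(inner ℝ (u - v) (x i) : ℝ)| ≤ ‖u - v‖ * ‖x i‖ := abs_real_inner_le_norm _ _
      _ ≤ ‖u - v‖ * R := by
          exact mul_le_mul_of_nonneg_left (hxn i) (norm_nonneg _)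
      _ = ε := by rw [hεdef]; ring
  have hg_mono : Monotone g := fun s t hst =>
    hqmono _ _ (hCDF_mono v hst) (hCDF_le_one v t)
  have hgu_mono : Monotone gu := fun s t hst =>
    hqmono _ _ (hCDF_mono u hst) (hCDF_le_one u t)
  have hg_mem : ∀ t, g t ∈ Set.Icc (-R) R := fun t => hqmem _ (hCDF_le_one v t)
  have hlow : ∀ t, g (t - ε) ≤ gu t := by
    intro t
    apply hqmono _ _ _ (hCDF_le_one u t)
    apply hPcmp
    intro i hi
    have := hinner_diff i
    have h2 : (inner ℝ u (x i) : ℝ) - (inner ℝ v (x i) : ℝ) ≤ ε := (abs_le.mp this).2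
    linarith
  have hhigh : ∀ t, gu t ≤ g (t + ε) := by
    intro t
    apply hqmono _ _ _ (hCDF_le_one v (t + ε))
    apply hPcmp
    intro i hi
    have := hinner_diff i
    have h2 : -ε ≤ (inner ℝ u (x i) : ℝ) - (inner ℝ v (x i) : ℝ) := (abs_le.mp this).1
    linarith
  have hkey := key_integral R ε hR.le hε g gu hg_mono hgu_mono hg_mem hlow hhigh
  calc ∫ t in (-R)..R, |gu t - g t| ≤ 4 * R * ε := hkey
    _ = 4 * R ^ 2 * ‖u - v‖ := by rw [hεdef]; ring
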